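/- For every n ≥ 2 and every subset S of {1,...,n}, the number of permutations of {1,...,n} with peak set exactly S is divisible by 2^{n - |S| - 1}. -/

import Mathlib

/-- The peak set (1-based indices) of a list: `i` is a peak if `1 < i < length`
and the `(i-1)`-st entry is less than the `i`-th, which is greater than the `(i+1)`-st. -/
def peaks (l : List ℕ) : Finset ℕ :=
  (Finset.Icc 2 (l.length - 1)).filter (fun i =>
    l.getD (i - 2) 0 < l.getD (i - 1) 0 ∧ l.getD i 0 < l.getD (i - 1) 0)

/-- `l` is (the one-line notation of) a permutation of `{1,...,n}`. -/
def IsPermOf (n : ℕ) (l : List ℕ) : Prop := l.Perm (List.range' 1 n)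

/-- The number of permutations of `{1,...,n}` with peak set exactly `S`. -/
noncomputable def numPerms (n : ℕ) (S : Finset ℕ) : ℕ :=
  {l : List ℕ | IsPermOf n l ∧ peaks l = S}.ncard

/-- `S` is `n`-admissible: some permutation of `{1,...,n}` has peak set exactly `S`. -/
def Admissible (n : ℕ) (S : Finset ℕ) : Prop :=
  ∃ l : List ℕ, IsPermOf n l ∧ peaks l = S


-- Auxiliary development


def permsF (m : ℕ) : Finset (List ℕ) := (List.range' 1 m).permutations.toFinset

def np (m : ℕ) (T : Finset ℕ) : ℕ := ((permsF m).filter (fun l => peaks l = T)).card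

lemma mem_permsF {m : ℕ} {l : List ℕ} : l ∈ permsF m ↔ IsPermOf m l := by
  simp [permsF, IsPermOf, List.mem_permutations]

lemma numPerms_eq_np (m : ℕ) (T : Finset ℕ) : numPerms m T = np m T := by
  rw [numPerms, np]
  rw [← Set.ncard_coe_finset]
  congr 1
  ext l
  simp [mem_permsF]

lemma mem_peaks {l : List ℕ} {i : ℕ} : i ∈ peaks l ↔ 2 ≤ i ∧ i ≤ l.length - 1 ∧
    l.getD (i - 2) 0 < l.getD (i - 1) 0 ∧ l.getD i 0 < l.getD (i - 1) 0 := by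
  simp [peaks, Finset.mem_filter, Finset.mem_Icc, and_assoc]

lemma peaks_subset (l : List ℕ) : peaks l ⊆ Finset.Icc 2 (l.length - 1) :=
  Finset.filter_subset _ _

lemma peaks_not_adjacent {l : List ℕ} {i : ℕ} (h1 : i ∈ peaks l) (h2 : i + 1 ∈ peaks l) : False := by
  rw [mem_peaks] at h1 h2
  obtain ⟨hi2, _, _, h1d⟩ := h1
  obtain ⟨_, _, h2a, _⟩ := h2
  have e1 : i + 1 - 2 = i - 1 := by omega
  have e2 : i + 1 - 1 = i := by omega
  rw [e1, e2] at h2a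
  omega

lemma getD_eq_zero_of_ge {l : List ℕ} {t : ℕ} (h : l.length ≤ t) : l.getD t 0 = 0 := by
  rw [List.getD_eq_getElem?_getD, List.getElem?_eq_none h]
  rfl

lemma getD_insertIdx (σ : List ℕ) (x t j : ℕ) (hj : j ≤ σ.length) :
    (σ.insertIdx j x).getD t 0 =
      if t < j then σ.getD t 0 else if t = j then x else σ.getD (t - 1) 0 := by
  have hlen : (σ.insertIdx j x).length = σ.length + 1 := List.length_insertIdx_of_le_length hj x
  by_cases h1 : t < j
  · rw [if_pos h1]
    have ht : t < σ.length := lt_of_lt_of_le h1 hj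
    rw [List.getD_eq_getElem?_getD, List.getD_eq_getElem?_getD,
      List.getElem?_eq_getElem (by omega), List.getElem?_eq_getElem ht,
      List.getElem_insertIdx_of_lt h1 (by omega)]
  · rw [if_neg h1]
    by_cases h2 : t = j
    · rw [if_pos h2]
      subst h2
      rw [List.getD_eq_getElem?_getD, List.getElem?_eq_getElem (by omega),
        List.getElem_insertIdx_self (by omega)]
      rfl
    · rw [if_neg h2]
      by_cases h3 : t ≤ σ.length
      · obtain ⟨k, rfl⟩ : ∃ k, t = j + k + 1 := ⟨t - j - 1, by omega⟩
        have hk : j + k < σ.length := by omega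
        have e : j + k + 1 - 1 = j + k := by omega
        rw [e, List.getD_eq_getElem?_getD, List.getD_eq_getElem?_getD,
          List.getElem?_eq_getElem (by omega), List.getElem?_eq_getElem hk,
          List.getElem_insertIdx_of_gt (by omega) (by omega)]
        simp only [e]
      · rw [getD_eq_zero_of_ge (by omega), getD_eq_zero_of_ge (by omega)]

lemma mem_peaks_insertIdx {σ : List ℕ} (x j : ℕ) (hj : j ≤ σ.length)
    (hx : ∀ v ∈ σ, v < x) (hx0 : 0 < x) (i : ℕ) :
    i ∈ peaks (σ.insertIdx j x) ↔
      ((i + 1 ≤ j ∧ i ∈ peaks σ) ∨ (i = j + 1 ∧ 1 ≤ j ∧ j + 1 ≤ σ.length) ∨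
        (j + 3 ≤ i ∧ i - 1 ∈ peaks σ)) := by
  have hlen : (σ.insertIdx j x).length = σ.length + 1 := List.length_insertIdx_of_le_length hj x
  have hgd : ∀ t, σ.getD t 0 < x := by
    intro t
    rcases lt_or_ge t σ.length with h | h
    · rw [List.getD_eq_getElem?_getD, List.getElem?_eq_getElem h]
      exact hx _ (List.getElem_mem _)
    · rw [getD_eq_zero_of_ge h]; exact hx0
  have g1 := hgd (i - 3); have g2 := hgd (i - 2); have g3 := hgd (i - 1); have g4 := hgd i
  simp only [mem_peaks, hlen]
  rw [getD_insertIdx σ x (i - 2) j hj, getD_insertIdx σ x (i - 1) j hj,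
    getD_insertIdx σ x i j hj]
  simp only [show i - 2 - 1 = i - 3 from by omega, show i - 1 - 1 = i - 2 from by omega,
    show i - 1 - 2 = i - 3 from by omega]
  split_ifs <;> omega

lemma peaks_insertIdx_zero {σ : List ℕ} {x : ℕ} (hx : ∀ v ∈ σ, v < x) (hx0 : 0 < x) :
    peaks (σ.insertIdx 0 x) = (peaks σ).image (· + 1) := by
  ext i
  rw [mem_peaks_insertIdx x 0 (Nat.zero_le _) hx hx0 i, Finset.mem_image]
  constructor
  · rintro (⟨h, _⟩ | ⟨_, h, _⟩ | ⟨h3, hp⟩)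
    · omega
    · omega
    · exact ⟨i - 1, hp, by omega⟩
  · rintro ⟨p, hp, rfl⟩
    have h2 := (mem_peaks.mp hp).1
    exact Or.inr (Or.inr ⟨by omega, by simpa using hp⟩)

lemma peaks_insertIdx_length {σ : List ℕ} {x : ℕ} (hx : ∀ v ∈ σ, v < x) (hx0 : 0 < x) :
    peaks (σ.insertIdx σ.length x) = peaks σ := by
  ext i
  rw [mem_peaks_insertIdx x σ.length le_rfl hx hx0 i]
  constructor
  · rintro (⟨_, hp⟩ | ⟨_, _, h⟩ | ⟨h3, hp⟩)
    · exact hp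
    · omega
    · have := (mem_peaks.mp hp).2.1
      have := (mem_peaks.mp hp).1
      omega
  · intro hp
    have h1 := (mem_peaks.mp hp).1
    have h2 := (mem_peaks.mp hp).2.1
    refine Or.inl ⟨by omega, hp⟩

-- list helpers
lemma insertIdx_append_len (l1 l2 : List ℕ) (x : ℕ) :
    (l1 ++ l2).insertIdx l1.length x = l1 ++ x :: l2 := by
  induction l1 with
  | nil => simp
  | cons a t ih => simp [List.insertIdx_succ_cons, ih]

lemma indexOf_append_cons (l1 l2 : List ℕ) (x : ℕ) (h : x ∉ l1) :
    (l1 ++ x :: l2).idxOf x = l1.length := by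
  induction l1 with
  | nil => simp
  | cons a t ih =>
      have hax : a ≠ x := by intro he; exact h (by simp [he])
      simp only [List.cons_append, List.idxOf_cons_ne _ hax, List.length_cons]
      rw [ih (fun hm => h (List.mem_cons_of_mem _ hm))]

lemma permsF_length {m : ℕ} {l : List ℕ} (h : l ∈ permsF m) : l.length = m := by
  rw [mem_permsF] at h
  simpa using h.length_eq

lemma permsF_mem_lt {m x : ℕ} {l : List ℕ} (h : l ∈ permsF m) {v : ℕ} (hv : v ∈ l)
    (hx : m < x) : v < x := by
  rw [mem_permsF] at h
  have := h.mem_iff.mp hv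
  rw [List.mem_range'_1] at this
  omega

lemma range'_one_concat (m : ℕ) (hm : 1 ≤ m) :
    List.range' 1 m = List.range' 1 (m - 1) ++ [m] := by
  obtain ⟨k, rfl⟩ : ∃ k, m = k + 1 := ⟨m - 1, by omega⟩
  have := List.range'_concat (step := 1) (s := 1) (n := k)
  simpa [Nat.add_comm] using this

lemma np_eq_sum (n : ℕ) (hn : 2 ≤ n) (S : Finset ℕ) :
    np n S = ∑ j ∈ Finset.range n,
      ((permsF (n - 1)).filter (fun σ => peaks (σ.insertIdx j n) = S)).card := by
  rw [np]
  rw [Finset.card_eq_sum_card_fiberwise (f := fun π => π.idxOf n) (t := Finset.range n) ?_]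
  · refine Finset.sum_congr rfl (fun j hj => ?_)
    rw [Finset.mem_range] at hj
    refine Finset.card_bij' (fun π _ => π.eraseIdx j) (fun σ _ => σ.insertIdx j n) ?_ ?_ ?_ ?_
    · -- forward maps into target
      intro π hπ
      simp only [Finset.mem_filter] at hπ ⊢
      obtain ⟨⟨hπm, hπS⟩, hπj⟩ := hπ
      subst hπj
      have hlen : π.length = n := permsF_length hπm
      have hmem : n ∈ π := by
        rw [mem_permsF] at hπm
        exact hπm.mem_iff.mpr (by rw [List.mem_range'_1]; omega)
      have hjlen : List.idxOf n π < π.length := List.idxOf_lt_length_iff.mpr hmem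
      have hget : π[List.idxOf n π] = n := List.getElem_idxOf hjlen
      have hdecomp : π = π.take (List.idxOf n π) ++ n :: π.drop (List.idxOf n π + 1) := by
        conv_lhs => rw [← List.take_append_drop (List.idxOf n π) π]
        congr 1
        rw [List.drop_eq_getElem_cons hjlen, hget]
      have herase : π.eraseIdx (List.idxOf n π) = π.take (List.idxOf n π) ++ π.drop (List.idxOf n π + 1) :=
        List.eraseIdx_eq_take_drop_succ π _
      have hlt : (π.take (List.idxOf n π)).length = List.idxOf n π := by
        rw [List.length_take]; omega
      have hia := insertIdx_append_len (π.take (List.idxOf n π)) (π.drop (List.idxOf n π + 1)) n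
      rw [hlt] at hia
      have hinsert : (π.eraseIdx (List.idxOf n π)).insertIdx (List.idxOf n π) n = π := by
        rw [herase, hia]
        exact hdecomp.symm
      constructor
      · rw [mem_permsF, IsPermOf]
        have h1 : List.Perm (n :: π.eraseIdx (List.idxOf n π)) π := by
          rw [herase]
          conv_rhs => rw [hdecomp]
          exact List.perm_middle.symm
        have h2 : List.Perm π (List.range' 1 (n - 1) ++ [n]) := by
          rw [← range'_one_concat n (by omega)]
          rw [mem_permsF] at hπm; exact hπm
        have h3 : List.Perm (n :: π.eraseIdx (List.idxOf n π)) (n :: List.range' 1 (n - 1)) :=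
          (h1.trans h2).trans (List.perm_append_singleton n _)
        exact h3.cons_inv
      · rw [hinsert]; exact hπS
    · -- backward maps into source
      intro σ hσ
      simp only [Finset.mem_filter] at hσ ⊢
      obtain ⟨hσm, hσS⟩ := hσ
      have hlen : σ.length = n - 1 := permsF_length hσm
      have hjle : j ≤ σ.length := by omega
      have hperm : List.Perm (σ.insertIdx j n) (List.range' 1 n) := by
        refine (List.perm_insertIdx n σ hjle).trans ?_
        rw [range'_one_concat n (by omega)]
        refine List.Perm.trans ?_ (List.perm_append_singleton n _).symm
        exact List.Perm.cons n (by rw [mem_permsF] at hσm; exact hσm)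
      refine ⟨⟨?_, hσS⟩, ?_⟩
      · rw [mem_permsF]; exact hperm
      · -- indexOf
        have hlt : (σ.take j).length = j := by rw [List.length_take]; omega
        have hia := insertIdx_append_len (σ.take j) (σ.drop j) n
        rw [hlt] at hia
        have hd : σ.insertIdx j n = σ.take j ++ n :: σ.drop j := by
          conv_lhs => rw [← List.take_append_drop j σ]
          rw [hia]
        rw [hd, indexOf_append_cons, hlt]
        intro hmem
        have hmem' : n ∈ σ := List.mem_of_mem_take hmem
        exact absurd (permsF_mem_lt hσm hmem' (by omega)) (lt_irrefl n)
    · intro π hπ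
      simp only [Finset.mem_filter] at hπ
      obtain ⟨⟨hπm, hπS⟩, hπj⟩ := hπ
      subst hπj
      have hlen : π.length = n := permsF_length hπm
      have hmem : n ∈ π := by
        rw [mem_permsF] at hπm
        exact hπm.mem_iff.mpr (by rw [List.mem_range'_1]; omega)
      have hjlen : List.idxOf n π < π.length := List.idxOf_lt_length_iff.mpr hmem
      have hget : π[List.idxOf n π] = n := List.getElem_idxOf hjlen
      have hdecomp : π = π.take (List.idxOf n π) ++ n :: π.drop (List.idxOf n π + 1) := by
        conv_lhs => rw [← List.take_append_drop (List.idxOf n π) π]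
        congr 1
        rw [List.drop_eq_getElem_cons hjlen, hget]
      show List.insertIdx (π.eraseIdx (List.idxOf n π)) (List.idxOf n π) n = π
      rw [List.eraseIdx_eq_take_drop_succ]
      have hlt : (π.take (List.idxOf n π)).length = List.idxOf n π := by
        rw [List.length_take]; omega
      have hia := insertIdx_append_len (π.take (List.idxOf n π)) (π.drop (List.idxOf n π + 1)) n
      rw [hlt] at hia
      rw [hia]
      exact hdecomp.symm
    · intro σ hσ
      simp only [Finset.mem_filter] at hσ
      have hlen : σ.length = n - 1 := permsF_length hσ.1
      exact List.eraseIdx_insertIdx_self n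
  · intro π hπ
    simp only [Finset.mem_coe, Finset.mem_filter] at hπ
    have hπm := hπ.1
    have hlen : π.length = n := permsF_length hπm
    have hmem : n ∈ π := by
      rw [mem_permsF] at hπm
      exact hπm.mem_iff.mpr (by rw [List.mem_range'_1]; omega)
    have hlt := List.idxOf_lt_length_iff.mpr hmem
    rw [hlen] at hlt
    exact Finset.mem_range.mpr hlt

def Mset (S : Finset ℕ) (s : ℕ) : Finset ℕ :=
  S.filter (· < s) ∪ (S.filter (fun t => s < t)).image (· - 1)

def Dset (S : Finset ℕ) (s : ℕ) : Finset ℕ :=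
  S.filter (· < s) ∪ (S.filter (fun t => s ≤ t)).image (· - 1)

def Eset (S : Finset ℕ) (s : ℕ) : Finset ℕ :=
  S.filter (· ≤ s) ∪ (S.filter (fun t => s < t)).image (· - 1)

lemma mem_Mset {S : Finset ℕ} {j x : ℕ} (hS : ∀ t ∈ S, 2 ≤ t) :
    x ∈ Mset S (j + 1) ↔ (x ∈ S ∧ x ≤ j) ∨ (x + 1 ∈ S ∧ j + 1 ≤ x) := by
  simp only [Mset, Finset.mem_union, Finset.mem_filter, Finset.mem_image]
  constructor
  · rintro (⟨hx, hlt⟩ | ⟨a, ⟨haS, hlt⟩, rfl⟩)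
    · exact Or.inl ⟨hx, by omega⟩
    · have ha2 := hS a haS
      refine Or.inr ⟨?_, by omega⟩
      have : a - 1 + 1 = a := by omega
      rwa [this]
  · rintro (⟨hx, hle⟩ | ⟨hx, hge⟩)
    · exact Or.inl ⟨hx, by omega⟩
    · exact Or.inr ⟨x + 1, ⟨hx, by omega⟩, by omega⟩

lemma Dset_eq_insert {S : Finset ℕ} {s : ℕ} (hs : s ∈ S) :
    Dset S s = insert (s - 1) (Mset S s) := by
  ext x
  simp only [Dset, Mset, Finset.mem_union, Finset.mem_filter, Finset.mem_image,
    Finset.mem_insert]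
  constructor
  · rintro (⟨h1, h2⟩ | ⟨a, ⟨haS, hle⟩, rfl⟩)
    · exact Or.inr (Or.inl ⟨h1, h2⟩)
    · rcases eq_or_lt_of_le hle with rfl | hlt
      · exact Or.inl rfl
      · exact Or.inr (Or.inr ⟨a, ⟨haS, hlt⟩, rfl⟩)
  · rintro (rfl | (⟨h1, h2⟩ | ⟨a, ⟨haS, hlt⟩, rfl⟩))
    · exact Or.inr ⟨s, ⟨hs, le_rfl⟩, rfl⟩
    · exact Or.inl ⟨h1, h2⟩
    · exact Or.inr ⟨a, ⟨haS, le_of_lt hlt⟩, rfl⟩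

lemma Eset_eq_insert {S : Finset ℕ} {s : ℕ} (hs : s ∈ S) :
    Eset S s = insert s (Mset S s) := by
  ext x
  simp only [Eset, Mset, Finset.mem_union, Finset.mem_filter, Finset.mem_image,
    Finset.mem_insert]
  constructor
  · rintro (⟨h1, h2⟩ | ⟨a, ⟨haS, hlt⟩, rfl⟩)
    · rcases eq_or_lt_of_le h2 with rfl | hlt
      · exact Or.inl rfl
      · exact Or.inr (Or.inl ⟨h1, hlt⟩)
    · exact Or.inr (Or.inr ⟨a, ⟨haS, hlt⟩, rfl⟩)
  · rintro (rfl | (⟨h1, h2⟩ | ⟨a, ⟨haS, hlt⟩, rfl⟩))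
    · exact Or.inl ⟨hs, le_rfl⟩
    · exact Or.inl ⟨h1, le_of_lt h2⟩
    · exact Or.inr ⟨a, ⟨haS, hlt⟩, rfl⟩

lemma solve_interior {n j : ℕ} {S : Finset ℕ} {σ : List ℕ}
    (hn : 3 ≤ n) (hσ : σ ∈ permsF (n - 1)) (hj1 : 1 ≤ j) (hj2 : j ≤ n - 2)
    (hS : S ⊆ Finset.Icc 2 (n - 1)) (hsp : ∀ t ∈ S, t + 1 ∉ S) (hs : j + 1 ∈ S) :
    peaks (σ.insertIdx j n) = S ↔
      (peaks σ = Mset S (j + 1) ∨ peaks σ = insert j (Mset S (j + 1)) ∨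
        peaks σ = insert (j + 1) (Mset S (j + 1))) := by
  have hlenσ : σ.length = n - 1 := permsF_length hσ
  have hx : ∀ v ∈ σ, v < n := fun v hv => permsF_mem_lt hσ hv (by omega)
  have master : ∀ i, i ∈ peaks (σ.insertIdx j n) ↔
      ((i + 1 ≤ j ∧ i ∈ peaks σ) ∨ (i = j + 1 ∧ 1 ≤ j ∧ j + 1 ≤ σ.length) ∨
        (j + 3 ≤ i ∧ i - 1 ∈ peaks σ)) :=
    mem_peaks_insertIdx n j (by omega) hx (by omega)
  have hSb : ∀ t ∈ S, 2 ≤ t ∧ t ≤ n - 1 := by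
    intro t ht; have := hS ht; rw [Finset.mem_Icc] at this; exact this
  have hS2 : ∀ t ∈ S, 2 ≤ t := fun t ht => (hSb t ht).1
  have hTb : ∀ t ∈ peaks σ, 2 ≤ t ∧ t ≤ σ.length - 1 := by
    intro t ht
    have := peaks_subset σ ht
    rw [Finset.mem_Icc] at this
    exact this
  have hj0 : j ∉ S := fun h => hsp j h hs
  have hj2S : j + 2 ∉ S := by
    have := hsp (j + 1) hs
    intro h; exact this (by simpa using h)
  have hMj : j ∉ Mset S (j + 1) := by
    rw [mem_Mset hS2]
    rintro (⟨h, _⟩ | ⟨_, h⟩)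
    · exact hj0 h
    · omega
  have hMj1 : j + 1 ∉ Mset S (j + 1) := by
    rw [mem_Mset hS2]
    rintro (⟨_, h⟩ | ⟨h, _⟩)
    · omega
    · exact hj2S (by simpa using h)
  constructor
  · intro h
    have clowe : ∀ t, t < j → (t ∈ peaks σ ↔ t ∈ S) := by
      intro t ht
      constructor
      · intro htT
        have hb := hTb t htT
        have : t ∈ peaks (σ.insertIdx j n) := (master t).mpr (Or.inl ⟨by omega, htT⟩)
        rwa [h] at this
      · intro htS
        have : t ∈ peaks (σ.insertIdx j n) := by rw [h]; exact htS
        rcases (master t).mp this with ⟨_, hp⟩ | ⟨he, _⟩ | ⟨hge, _⟩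
        · exact hp
        · omega
        · omega
    have chigh : ∀ t, j + 2 ≤ t → (t ∈ peaks σ ↔ t + 1 ∈ S) := by
      intro t ht
      constructor
      · intro htT
        have : t + 1 ∈ peaks (σ.insertIdx j n) := by
          refine (master (t + 1)).mpr (Or.inr (Or.inr ⟨by omega, ?_⟩))
          simpa using htT
        rwa [h] at this
      · intro htS
        have : t + 1 ∈ peaks (σ.insertIdx j n) := by rw [h]; exact htS
        rcases (master (t + 1)).mp this with ⟨hc, _⟩ | ⟨he, _⟩ | ⟨_, hp⟩
        · omega
        · omega
        · simpa using hp
    have main : ∀ t, t ≠ j → t ≠ j + 1 → (t ∈ peaks σ ↔ t ∈ Mset S (j + 1)) := by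
      intro t htj htj1
      rw [mem_Mset hS2]
      rcases (by omega : t < j ∨ j + 2 ≤ t) with ht | ht
      · rw [clowe t ht]
        constructor
        · intro hh; exact Or.inl ⟨hh, by omega⟩
        · rintro (⟨hh, _⟩ | ⟨_, hh⟩)
          · exact hh
          · omega
      · rw [chigh t ht]
        constructor
        · intro hh; exact Or.inr ⟨hh, by omega⟩
        · rintro (⟨_, hh⟩ | ⟨hh, _⟩)
          · omega
          · exact hh
    by_cases h1 : j ∈ peaks σ <;> by_cases h2 : j + 1 ∈ peaks σ
    · exact absurd h2 (fun hh => peaks_not_adjacent h1 hh)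
    · refine Or.inr (Or.inl ?_)
      ext t
      rw [Finset.mem_insert]
      by_cases htj : t = j
      · subst htj; simp [h1]
      · by_cases htj1 : t = j + 1
        · subst htj1
          constructor
          · intro hh; exact absurd hh h2
          · rintro (hh | hh)
            · omega
            · exact absurd hh hMj1
        · rw [main t htj htj1]
          constructor
          · intro hh; exact Or.inr hh
          · rintro (hh | hh)
            · exact absurd hh htj
            · exact hh
    · refine Or.inr (Or.inr ?_)
      ext t
      rw [Finset.mem_insert]
      by_cases htj1 : t = j + 1
      · subst htj1; simp [h2]
      · by_cases htj : t = j
        · subst htj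
          constructor
          · intro hh; exact absurd hh h1
          · rintro (hh | hh)
            · omega
            · exact absurd hh hMj
        · rw [main t htj htj1]
          constructor
          · intro hh; exact Or.inr hh
          · rintro (hh | hh)
            · exact absurd hh htj1
            · exact hh
    · refine Or.inl ?_
      ext t
      by_cases htj : t = j
      · subst htj
        constructor
        · intro hh; exact absurd hh h1
        · intro hh; exact absurd hh hMj
      · by_cases htj1 : t = j + 1
        · subst htj1
          constructor
          · intro hh; exact absurd hh h2
          · intro hh; exact absurd hh hMj1
        · exact main t htj htj1
  · intro hT
    have rev : ∀ T' : Finset ℕ,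
        (∀ t, t ≠ j → t ≠ j + 1 → (t ∈ T' ↔ t ∈ Mset S (j + 1))) →
        peaks σ = T' → peaks (σ.insertIdx j n) = S := by
      intro T' hchar hpT
      ext i
      rw [master i, hpT]
      constructor
      · rintro (⟨hij, hiT⟩ | ⟨rfl, _, _⟩ | ⟨hij, hiT⟩)
        · rw [hchar i (by omega) (by omega), mem_Mset hS2] at hiT
          rcases hiT with ⟨hh, _⟩ | ⟨_, hh⟩
          · exact hh
          · omega
        · exact hs
        · rw [hchar (i - 1) (by omega) (by omega), mem_Mset hS2] at hiT
          rcases hiT with ⟨_, hh⟩ | ⟨hh, _⟩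
          · omega
          · have he : i - 1 + 1 = i := by omega
            rwa [he] at hh
      · intro hiS
        have hb := hSb i hiS
        rcases (by omega : i < j ∨ i = j ∨ i = j + 1 ∨ i = j + 2 ∨ j + 3 ≤ i) with
          ht | rfl | rfl | rfl | ht
        · refine Or.inl ⟨by omega, ?_⟩
          rw [hchar i (by omega) (by omega), mem_Mset hS2]
          exact Or.inl ⟨hiS, by omega⟩
        · exact absurd hiS hj0
        · exact Or.inr (Or.inl ⟨rfl, by omega, by omega⟩)
        · exact absurd hiS hj2S
        · refine Or.inr (Or.inr ⟨by omega, ?_⟩)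
          rw [hchar (i - 1) (by omega) (by omega), mem_Mset hS2]
          refine Or.inr ⟨?_, by omega⟩
          have he : i - 1 + 1 = i := by omega
          rwa [he]
    rcases hT with hT | hT | hT
    · exact rev _ (fun t h1 h2 => Iff.rfl) hT
    · refine rev _ (fun t h1 h2 => ?_) hT
      rw [Finset.mem_insert]
      constructor
      · rintro (hh | hh)
        · exact absurd hh h1
        · exact hh
      · intro hh; exact Or.inr hh
    · refine rev _ (fun t h1 h2 => ?_) hT
      rw [Finset.mem_insert]
      constructor
      · rintro (hh | hh)
        · exact absurd hh h2
        · exact hh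
      · intro hh; exact Or.inr hh

lemma cnt_zero {n : ℕ} (hn : 2 ≤ n) {S : Finset ℕ} (hS2 : ∀ t ∈ S, 2 ≤ t) :
    ((permsF (n - 1)).filter (fun σ => peaks (σ.insertIdx 0 n) = S)).card =
      np (n - 1) (S.image (· - 1)) := by
  rw [np]
  congr 1
  apply Finset.filter_congr
  intro σ hσ
  have hx : ∀ v ∈ σ, v < n := fun v hv => permsF_mem_lt hσ hv (by omega)
  rw [peaks_insertIdx_zero hx (by omega)]
  constructor
  · intro h
    have := congrArg (Finset.image (· - 1)) h
    rw [Finset.image_image] at this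
    have e : ((fun x => x - 1) ∘ (fun x => x + 1)) = id := funext fun a => by simp
    rwa [e, Finset.image_id] at this
  · intro h
    rw [h, Finset.image_image]
    ext x
    simp only [Finset.mem_image, Function.comp_apply]
    constructor
    · rintro ⟨a, haS, rfl⟩
      have := hS2 a haS
      have e : a - 1 + 1 = a := by omega
      rwa [e]
    · intro hx
      exact ⟨x, hx, by have := hS2 x hx; omega⟩

lemma cnt_last {n : ℕ} (hn : 2 ≤ n) (S : Finset ℕ) :
    ((permsF (n - 1)).filter (fun σ => peaks (σ.insertIdx (n - 1) n) = S)).card =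
      np (n - 1) S := by
  rw [np]
  congr 1
  apply Finset.filter_congr
  intro σ hσ
  have hx : ∀ v ∈ σ, v < n := fun v hv => permsF_mem_lt hσ hv (by omega)
  have hlen : σ.length = n - 1 := permsF_length hσ
  rw [← hlen, peaks_insertIdx_length hx (by omega)]

lemma cnt_interior_notin {n j : ℕ} (hn : 3 ≤ n) {S : Finset ℕ}
    (hj1 : 1 ≤ j) (hj2 : j ≤ n - 2) (hs : j + 1 ∉ S) :
    ((permsF (n - 1)).filter (fun σ => peaks (σ.insertIdx j n) = S)).card = 0 := by
  rw [Finset.card_eq_zero, Finset.filter_eq_empty_iff]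
  intro σ hσ
  have hx : ∀ v ∈ σ, v < n := fun v hv => permsF_mem_lt hσ hv (by omega)
  have hlen : σ.length = n - 1 := permsF_length hσ
  intro h
  apply hs
  rw [← h]
  exact (mem_peaks_insertIdx n j (by omega) hx (by omega) (j + 1)).mpr
    (Or.inr (Or.inl ⟨rfl, by omega, by omega⟩))

lemma cnt_interior {n j : ℕ} (hn : 3 ≤ n) {S : Finset ℕ}
    (hS : S ⊆ Finset.Icc 2 (n - 1)) (hsp : ∀ t ∈ S, t + 1 ∉ S)
    (hj1 : 1 ≤ j) (hj2 : j ≤ n - 2) (hs : j + 1 ∈ S) :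
    ((permsF (n - 1)).filter (fun σ => peaks (σ.insertIdx j n) = S)).card =
      np (n - 1) (Mset S (j + 1)) + np (n - 1) (insert j (Mset S (j + 1))) +
        np (n - 1) (insert (j + 1) (Mset S (j + 1))) := by
  have hS2 : ∀ t ∈ S, 2 ≤ t := by
    intro t ht; have := hS ht; rw [Finset.mem_Icc] at this; omega
  have hMj : j ∉ Mset S (j + 1) := by
    rw [mem_Mset hS2]
    rintro (⟨h, _⟩ | ⟨_, h⟩)
    · exact hsp j h hs
    · omega
  have hMj1 : j + 1 ∉ Mset S (j + 1) := by
    rw [mem_Mset hS2]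
    rintro (⟨_, h⟩ | ⟨h, _⟩)
    · omega
    · exact hsp (j + 1) hs (by simpa using h)
  have hfc : (permsF (n - 1)).filter (fun σ => peaks (σ.insertIdx j n) = S) =
      ((permsF (n - 1)).filter (fun σ => peaks σ = Mset S (j + 1))) ∪
      (((permsF (n - 1)).filter (fun σ => peaks σ = insert j (Mset S (j + 1)))) ∪
       ((permsF (n - 1)).filter (fun σ => peaks σ = insert (j + 1) (Mset S (j + 1))))) := by
    rw [← Finset.filter_or, ← Finset.filter_or]
    apply Finset.filter_congr
    intro σ hσ
    exact solve_interior hn hσ hj1 hj2 hS hsp hs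
  rw [np, np, np, hfc]
  have d23 : Disjoint ((permsF (n - 1)).filter (fun σ => peaks σ = insert j (Mset S (j + 1))))
      ((permsF (n - 1)).filter (fun σ => peaks σ = insert (j + 1) (Mset S (j + 1)))) := by
    rw [Finset.disjoint_left]
    intro σ h1 h2
    rw [Finset.mem_filter] at h1 h2
    have : j ∈ insert (j + 1) (Mset S (j + 1)) := by
      rw [← h2.2, h1.2]
      exact Finset.mem_insert_self _ _
    rw [Finset.mem_insert] at this
    rcases this with h | h
    · omega
    · exact hMj h
  have d123 : Disjoint ((permsF (n - 1)).filter (fun σ => peaks σ = Mset S (j + 1)))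
      (((permsF (n - 1)).filter (fun σ => peaks σ = insert j (Mset S (j + 1)))) ∪
       ((permsF (n - 1)).filter (fun σ => peaks σ = insert (j + 1) (Mset S (j + 1))))) := by
    rw [Finset.disjoint_left]
    intro σ h1 h2
    rw [Finset.mem_union] at h2
    rw [Finset.mem_filter] at h1
    rcases h2 with h2 | h2 <;> rw [Finset.mem_filter] at h2
    · apply hMj
      rw [h1.2.symm.trans h2.2]
      exact Finset.mem_insert_self _ _
    · apply hMj1
      rw [h1.2.symm.trans h2.2]
      exact Finset.mem_insert_self _ _
  rw [Finset.card_union_of_disjoint d123, Finset.card_union_of_disjoint d23]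
  omega

lemma np_recursion (n : ℕ) (hn : 3 ≤ n) (S : Finset ℕ) (hS : S ⊆ Finset.Icc 2 (n - 1))
    (hsp : ∀ t ∈ S, t + 1 ∉ S) :
    np n S = np (n - 1) (S.image (· - 1)) + np (n - 1) S +
      ∑ s ∈ S, (np (n - 1) (Mset S s) + np (n - 1) (insert (s - 1) (Mset S s)) +
        np (n - 1) (insert s (Mset S s))) := by
  have hS2 : ∀ t ∈ S, 2 ≤ t := by
    intro t ht; have := hS ht; rw [Finset.mem_Icc] at this; omega
  rw [np_eq_sum n (by omega) S]
  have hsplit : Finset.range n = insert 0 (insert (n - 1) (Finset.Icc 1 (n - 2))) := by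
    ext x
    simp only [Finset.mem_range, Finset.mem_insert, Finset.mem_Icc]
    omega
  rw [hsplit, Finset.sum_insert, Finset.sum_insert]
  · rw [cnt_zero (by omega) hS2, cnt_last (by omega)]
    have hmid : ∑ j ∈ Finset.Icc 1 (n - 2),
        ((permsF (n - 1)).filter (fun σ => peaks (σ.insertIdx j n) = S)).card =
        ∑ s ∈ S, (np (n - 1) (Mset S s) + np (n - 1) (insert (s - 1) (Mset S s)) +
          np (n - 1) (insert s (Mset S s))) := by
      have step1 : ∑ j ∈ Finset.Icc 1 (n - 2),
          ((permsF (n - 1)).filter (fun σ => peaks (σ.insertIdx j n) = S)).card =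
          ∑ j ∈ Finset.Icc 1 (n - 2), (if j + 1 ∈ S then
            (np (n - 1) (Mset S (j + 1)) + np (n - 1) (insert j (Mset S (j + 1))) +
              np (n - 1) (insert (j + 1) (Mset S (j + 1)))) else 0) := by
        refine Finset.sum_congr rfl (fun j hj => ?_)
        rw [Finset.mem_Icc] at hj
        by_cases hjs : j + 1 ∈ S
        · rw [if_pos hjs, cnt_interior hn hS hsp hj.1 hj.2 hjs]
        · rw [if_neg hjs, cnt_interior_notin hn hj.1 hj.2 hjs]
      rw [step1, ← Finset.sum_filter]
      refine Finset.sum_nbij' (i := fun j => j + 1) (j := fun s => s - 1) ?_ ?_ ?_ ?_ ?_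
      · intro a ha
        rw [Finset.mem_filter] at ha
        exact ha.2
      · intro s hsS
        have h2 := hS2 s hsS
        have hb := hS hsS
        rw [Finset.mem_Icc] at hb
        show s - 1 ∈ Finset.filter (fun j => j + 1 ∈ S) (Finset.Icc 1 (n - 2))
        rw [Finset.mem_filter, Finset.mem_Icc]
        refine ⟨⟨by omega, by omega⟩, ?_⟩
        have e : s - 1 + 1 = s := by omega
        rwa [e]
      · intro a ha
        show a + 1 - 1 = a
        omega
      · intro s hsS
        have h2 := hS2 s hsS
        show s - 1 + 1 = s
        omega
      · intro a ha
        rfl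
    rw [hmid]
    omega
  · simp only [Finset.mem_insert, Finset.mem_Icc]
    omega
  · simp only [Finset.mem_insert, Finset.mem_Icc]
    omega

lemma Dset_min {a : ℕ} {S' : Finset ℕ} (ha : ∀ x ∈ S', a < x) :
    Dset (insert a S') a = (insert a S').image (· - 1) := by
  ext x
  simp only [Dset, Finset.mem_union, Finset.mem_filter, Finset.mem_image, Finset.mem_insert]
  constructor
  · rintro (⟨h1, h2⟩ | ⟨y, ⟨hy, _⟩, rfl⟩)
    · rcases h1 with rfl | h1
      · omega
      · exact absurd (ha x h1) (by omega)
    · exact ⟨y, hy, rfl⟩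
  · rintro ⟨y, hy, rfl⟩
    refine Or.inr ⟨y, ⟨hy, ?_⟩, rfl⟩
    rcases hy with rfl | hy
    · exact le_rfl
    · exact le_of_lt (ha y hy)

lemma Eset_min {a : ℕ} {S' : Finset ℕ} (ha : ∀ x ∈ S', a < x) :
    Eset (insert a S') a = insert a (S'.image (· - 1)) := by
  ext x
  simp only [Eset, Finset.mem_union, Finset.mem_filter, Finset.mem_image, Finset.mem_insert]
  constructor
  · rintro (⟨h1, h2⟩ | ⟨y, ⟨hy, hlt⟩, rfl⟩)
    · rcases h1 with rfl | h1
      · exact Or.inl rfl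
      · exact absurd (ha x h1) (by omega)
    · rcases hy with rfl | hy
      · omega
      · exact Or.inr ⟨y, hy, rfl⟩
  · rintro (rfl | ⟨y, hy, rfl⟩)
    · exact Or.inl ⟨Or.inl rfl, le_rfl⟩
    · exact Or.inr ⟨y, ⟨Or.inr hy, ha y hy⟩, rfl⟩

lemma Dset_insert_gt {a s : ℕ} {S' : Finset ℕ} (ha : ∀ x ∈ S', a < x) (hs : s ∈ S') :
    Dset (insert a S') s = insert a (Dset S' s) := by
  have has : a < s := ha s hs
  ext x
  simp only [Dset, Finset.mem_union, Finset.mem_filter, Finset.mem_image, Finset.mem_insert]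
  constructor
  · rintro (⟨h1, h2⟩ | ⟨y, ⟨hy, hle⟩, rfl⟩)
    · rcases h1 with rfl | h1
      · exact Or.inl rfl
      · exact Or.inr (Or.inl ⟨h1, h2⟩)
    · rcases hy with rfl | hy
      · omega
      · exact Or.inr (Or.inr ⟨y, ⟨hy, hle⟩, rfl⟩)
  · rintro (rfl | (⟨h1, h2⟩ | ⟨y, ⟨hy, hle⟩, rfl⟩))
    · exact Or.inl ⟨Or.inl rfl, has⟩
    · exact Or.inl ⟨Or.inr h1, h2⟩
    · exact Or.inr ⟨y, ⟨Or.inr hy, hle⟩, rfl⟩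

lemma Eset_insert_gt {a s : ℕ} {S' : Finset ℕ} (ha : ∀ x ∈ S', a < x) (hs : s ∈ S') :
    Eset (insert a S') s = insert a (Eset S' s) := by
  have has : a < s := ha s hs
  ext x
  simp only [Eset, Finset.mem_union, Finset.mem_filter, Finset.mem_image, Finset.mem_insert]
  constructor
  · rintro (⟨h1, h2⟩ | ⟨y, ⟨hy, hlt⟩, rfl⟩)
    · rcases h1 with rfl | h1
      · exact Or.inl rfl
      · exact Or.inr (Or.inl ⟨h1, h2⟩)
    · rcases hy with rfl | hy
      · omega
      · exact Or.inr (Or.inr ⟨y, ⟨hy, hlt⟩, rfl⟩)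
  · rintro (rfl | (⟨h1, h2⟩ | ⟨y, ⟨hy, hlt⟩, rfl⟩))
    · exact Or.inl ⟨Or.inl rfl, le_of_lt has⟩
    · exact Or.inl ⟨Or.inr h1, h2⟩
    · exact Or.inr ⟨y, ⟨Or.inr hy, hlt⟩, rfl⟩

lemma telescope (S : Finset ℕ) : ∀ f : Finset ℕ → ℕ,
    (∑ s ∈ S, f (Dset S s)) + f S = f (S.image (· - 1)) + ∑ s ∈ S, f (Eset S s) := by
  induction S using Finset.induction_on_min with
  | empty => intro f; simp
  | insert a S' ha ih =>
      intro f
      have ha' : a ∉ S' := fun h => absurd (ha a h) (lt_irrefl a)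
      rw [Finset.sum_insert ha', Finset.sum_insert ha']
      have e1 : ∑ s ∈ S', f (Dset (insert a S') s) = ∑ s ∈ S', f (insert a (Dset S' s)) :=
        Finset.sum_congr rfl (fun s hs => by rw [Dset_insert_gt ha hs])
      have e2 : ∑ s ∈ S', f (Eset (insert a S') s) = ∑ s ∈ S', f (insert a (Eset S' s)) :=
        Finset.sum_congr rfl (fun s hs => by rw [Eset_insert_gt ha hs])
      rw [e1, e2, Dset_min ha, Eset_min ha]
      have := ih (fun X => f (insert a X))
      omega

lemma np_zero_of_not_subset {n : ℕ} {S : Finset ℕ} (h : ¬ S ⊆ Finset.Icc 2 (n - 1)) :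
    np n S = 0 := by
  rw [np, Finset.card_eq_zero, Finset.filter_eq_empty_iff]
  intro σ hσ hpeaks
  apply h
  rw [← hpeaks]
  have := peaks_subset σ
  rwa [permsF_length hσ] at this

lemma np_zero_of_adjacent {n : ℕ} {S : Finset ℕ} {s : ℕ} (hs : s ∈ S) (hs1 : s + 1 ∈ S) :
    np n S = 0 := by
  rw [np, Finset.card_eq_zero, Finset.filter_eq_empty_iff]
  intro σ hσ hpeaks
  rw [← hpeaks] at hs hs1
  exact peaks_not_adjacent hs hs1

lemma filter_lt_union_filter_gt {S : Finset ℕ} {s : ℕ} (hs : s ∈ S) :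
    S.filter (· < s) ∪ S.filter (fun t => s < t) = S.erase s := by
  ext x
  simp only [Finset.mem_union, Finset.mem_filter, Finset.mem_erase]
  constructor
  · rintro (⟨h1, h2⟩ | ⟨h1, h2⟩)
    · exact ⟨by omega, h1⟩
    · exact ⟨by omega, h1⟩
  · rintro ⟨h1, h2⟩
    rcases (by omega : x < s ∨ s < x) with h | h
    · exact Or.inl ⟨h2, h⟩
    · exact Or.inr ⟨h2, h⟩

lemma card_Mset_le {S : Finset ℕ} {s : ℕ} (hs : s ∈ S) :
    (Mset S s).card ≤ S.card - 1 := by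
  have h1 : (Mset S s).card ≤ (S.filter (· < s)).card + (S.filter (fun t => s < t)).card := by
    refine le_trans (Finset.card_union_le _ _) ?_
    exact Nat.add_le_add_left (Finset.card_image_le) _
  have h2 : (S.filter (· < s)).card + (S.filter (fun t => s < t)).card = (S.erase s).card := by
    rw [← filter_lt_union_filter_gt hs]
    rw [Finset.card_union_of_disjoint]
    rw [Finset.disjoint_left]
    intro x hx hx'
    rw [Finset.mem_filter] at hx hx'
    omega
  rw [Finset.card_erase_of_mem hs] at h2
  omega

lemma np2 : np 2 ∅ = 2 := by
  rw [np]
  have hall : ∀ l ∈ permsF 2, peaks l = ∅ := by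
    intro l hl
    have h1 := peaks_subset l
    rw [permsF_length hl] at h1
    have : Finset.Icc 2 (2 - 1) = ∅ := Finset.Icc_eq_empty (by omega)
    rw [this] at h1
    exact Finset.subset_empty.mp h1
  rw [Finset.filter_true_of_mem hall]
  rw [permsF, List.toFinset_card_of_nodup
    (List.nodup_permutations _ (by decide : (List.range' 1 2).Nodup))]
  rw [List.length_permutations]
  simp

theorem np_main (n : ℕ) (hn2 : 2 ≤ n) : ∀ S : Finset ℕ, 2 ^ (n - S.card - 1) ∣ np n S := by
  induction n, hn2 using Nat.le_induction with
  | base =>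
      intro S
      by_cases hS0 : S = ∅
      · subst hS0
        simp only [Finset.card_empty]
        rw [np2]
        norm_num
      · have h : ¬ S ⊆ Finset.Icc 2 (2 - 1) := by
          intro hsub
          obtain ⟨x, hx⟩ := Finset.nonempty_iff_ne_empty.mpr hS0
          have := hsub hx
          rw [show Finset.Icc 2 (2 - 1) = ∅ from Finset.Icc_eq_empty (by omega)] at this
          exact absurd this (Finset.notMem_empty x)
        rw [np_zero_of_not_subset h]
        exact dvd_zero _
  | succ n hn ih =>
      intro S
      by_cases hsub : S ⊆ Finset.Icc 2 (n + 1 - 1)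
      · by_cases hsp : ∀ t ∈ S, t + 1 ∉ S
        · set k := S.card with hk
          by_cases hkn : k + 1 ≤ n
          · -- main case
            have hrec := np_recursion (n + 1) (by omega) S hsub hsp
            have e1 : n + 1 - 1 = n := by omega
            rw [e1] at hrec
            have htel := telescope S (np n)
            have htel' : (∑ s ∈ S, np n (insert (s - 1) (Mset S s))) + np n S =
                np n (S.image (· - 1)) + ∑ s ∈ S, np n (insert s (Mset S s)) := by
              have ed : ∀ s ∈ S, np n (Dset S s) = np n (insert (s - 1) (Mset S s)) :=
                fun s hs => by rw [Dset_eq_insert hs]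
              have ee : ∀ s ∈ S, np n (Eset S s) = np n (insert s (Mset S s)) :=
                fun s hs => by rw [Eset_eq_insert hs]
              rw [← Finset.sum_congr rfl ed, ← Finset.sum_congr rfl ee]
              exact htel
            have hsum3 : ∑ s ∈ S, (np n (Mset S s) + np n (insert (s - 1) (Mset S s)) +
                np n (insert s (Mset S s))) = (∑ s ∈ S, np n (Mset S s)) +
                (∑ s ∈ S, np n (insert (s - 1) (Mset S s))) +
                (∑ s ∈ S, np n (insert s (Mset S s))) := by
              rw [Finset.sum_add_distrib, Finset.sum_add_distrib]
            rw [hsum3] at hrec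
            -- divisibility of the M-terms
            have hM : 2 ^ (n + 1 - k - 1) ∣ ∑ s ∈ S, np n (Mset S s) := by
              refine Finset.dvd_sum (fun s hs => ?_)
              have hcard : (Mset S s).card ≤ k - 1 := card_Mset_le hs
              have hk1 : 1 ≤ k := Finset.card_pos.mpr ⟨s, hs⟩
              refine dvd_trans (pow_dvd_pow 2 ?_) (ih (Mset S s))
              omega
            have hEdvd : 2 ^ (n - k - 1) ∣ np n (S.image (· - 1)) + ∑ s ∈ S, np n (insert s (Mset S s)) := by
              refine dvd_add ?_ (Finset.dvd_sum (fun s hs => ?_))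
              · refine dvd_trans (pow_dvd_pow 2 ?_) (ih (S.image (· - 1)))
                have := Finset.card_image_le (f := (· - 1)) (s := S)
                omega
              · refine dvd_trans (pow_dvd_pow 2 ?_) (ih (insert s (Mset S s)))
                have h1 : (insert s (Mset S s)).card ≤ (Mset S s).card + 1 :=
                  Finset.card_insert_le _ _
                have h2 : (Mset S s).card ≤ k - 1 := card_Mset_le hs
                have hk1 : 1 ≤ k := Finset.card_pos.mpr ⟨s, hs⟩
                omega
            -- combine
            obtain ⟨A, hA⟩ := hEdvd
            obtain ⟨B, hB⟩ := hM
            have key : np (n + 1) S = 2 ^ (n + 1 - k - 1) * B + 2 * (2 ^ (n - k - 1) * A) := by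
              rw [← hA, ← hB]
              omega
            rw [key]
            refine dvd_add ⟨B, rfl⟩ ?_
            have : (2 : ℕ) * 2 ^ (n - k - 1) = 2 ^ (n + 1 - k - 1) := by
              rw [← pow_succ']
              congr 1
              omega
            rw [← mul_assoc, this]
            exact ⟨A, rfl⟩
          · -- exponent is zero
            have : n + 1 - k - 1 = 0 := by omega
            rw [this, pow_zero]
            exact one_dvd _
        · push_neg at hsp
          obtain ⟨s, hs, hs1⟩ := hsp
          rw [np_zero_of_adjacent hs hs1]
          exact dvd_zero _
      · rw [np_zero_of_not_subset hsub]
        exact dvd_zero _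

theorem stmt_14 (n : ℕ) (hn : 2 ≤ n) (S : Finset ℕ) (hS : S ⊆ Finset.Icc 1 n) :
    2 ^ (n - S.card - 1) ∣ numPerms n S := by
  rw [numPerms_eq_np]
  exact np_main n hn S
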